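/- Let $E_2^{i,j} \Rightarrow E^{i+j}$ and $H_2^{i,j} \Rightarrow H^{i+j}$ be two convergent (biregular, first-quadrant-type bounded) spectral sequences in an abelian category with a morphism of spectral sequences $\phi: E \to H$ with components $\phi_2^{i,j}: E_2^{i,j} \to H_2^{i,j}$ and limit maps $\phi^n: E^n \to H^n$. Fix integers $l$ and $a$. Suppose that $E_2^{i,l-i} = 0$ for all $i < a$, that $H_2^{i,l-i} = 0$ for all $i > a$, and that $\phi_2^{a,l-a} = 0$. Then $\phi^l = 0$. -/

import Mathlib

universe u

/-- A biregular (convergent, bounded) spectral sequence of abelian groups, following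
EGA III 0.11. Here `page r p q` denotes the term `E_{r+2}^{p,q}` (so `page 0` is the
second page `E₂`), `d` are the differentials, `α` the isomorphisms identifying the next
page with the homology of the previous one, `rstab p q` is a page at which the term
`(p,q)` has stabilized (all further differentials in and out of it vanish), `ab n` are
the abutments `Eⁿ` with their bounded decreasing filtrations `fil`, and `β` identifies
the stable terms `E_∞^{p,q}` with the graded pieces of the filtration. -/
structure BiregularSpectralSequence : Type (u + 1) where
  page : ℕ → ℤ → ℤ → AddCommGrpCat.{u}
  d : ∀ (r : ℕ) (p q : ℤ), ↥(page r p q) →+ ↥(page r (p + (r + 2)) (q - (r + 2) + 1))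
  d_comp_d : ∀ r p q, (d r (p + (r + 2)) (q - (r + 2) + 1)).comp (d r p q) = 0
  α : ∀ (r : ℕ) (p q : ℤ),
    ↥(page (r + 1) (p + (r + 2)) (q - (r + 2) + 1)) ≃+
      ((d r (p + (r + 2)) (q - (r + 2) + 1)).ker ⧸
        ((d r p q).range.addSubgroupOf (d r (p + (r + 2)) (q - (r + 2) + 1)).ker))
  rstab : ℤ → ℤ → ℕ
  d_out_zero : ∀ (p q : ℤ) (r : ℕ), rstab p q ≤ r → d r p q = 0
  d_in_zero : ∀ (p q : ℤ) (r : ℕ), rstab (p + (r + 2)) (q - (r + 2) + 1) ≤ r → d r p q = 0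
  ab : ℤ → AddCommGrpCat.{u}
  fil : (n : ℤ) → ℤ → AddSubgroup (ab n)
  fil_antitone : ∀ n, Antitone (fil n)
  fil_top : ∀ n, ∃ p, fil n p = ⊤
  fil_bot : ∀ n, ∃ p, fil n p = ⊥
  β : ∀ (p q : ℤ) (r : ℕ), rstab p q ≤ r →
    ↥(page r p q) ≃+
      (fil (p + q) p ⧸ ((fil (p + q) (p + 1)).addSubgroupOf (fil (p + q) p)))

namespace BiregularSpectralSequence

variable (E H : BiregularSpectralSequence.{u})

/-- The map induced on the graded pieces of the filtrations of the abutments by a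
filtration-preserving map. -/
def filGradedMap (fab : ∀ n, ↥(E.ab n) →+ ↥(H.ab n))
    (hfil : ∀ n p, (E.fil n p).map (fab n) ≤ H.fil n p) (n p : ℤ) :
    (E.fil n p ⧸ ((E.fil n (p + 1)).addSubgroupOf (E.fil n p))) →+
      (H.fil n p ⧸ ((H.fil n (p + 1)).addSubgroupOf (H.fil n p))) :=
  QuotientAddGroup.map _ _
    (AddMonoidHom.codRestrict ((fab n).comp (E.fil n p).subtype) (H.fil n p)
      (fun x => hfil n p (AddSubgroup.mem_map.mpr ⟨x.1, x.2, rfl⟩)))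
    (by
      intro x hx
      have hx' : (x : ↥(E.ab n)) ∈ E.fil n (p + 1) := hx
      show ((fab n).comp (E.fil n p).subtype) x ∈ H.fil n (p + 1)
      exact hfil n (p + 1) (AddSubgroup.mem_map.mpr ⟨x.1, hx', rfl⟩))

/-- The map induced on the homology of page `r` by a map of spectral sequences. -/
def pageHomologyMap (f : ∀ r p q, ↥(E.page r p q) →+ ↥(H.page r p q))
    (hcomm : ∀ r p q, (H.d r p q).comp (f r p q) =
      (f r (p + (r + 2)) (q - (r + 2) + 1)).comp (E.d r p q)) (r : ℕ) (p q : ℤ) :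
    ((E.d r (p + (r + 2)) (q - (r + 2) + 1)).ker ⧸
        ((E.d r p q).range.addSubgroupOf (E.d r (p + (r + 2)) (q - (r + 2) + 1)).ker)) →+
      ((H.d r (p + (r + 2)) (q - (r + 2) + 1)).ker ⧸
        ((H.d r p q).range.addSubgroupOf (H.d r (p + (r + 2)) (q - (r + 2) + 1)).ker)) :=
  QuotientAddGroup.map _ _
    (AddMonoidHom.codRestrict
      ((f r (p + (r + 2)) (q - (r + 2) + 1)).comp
        (E.d r (p + (r + 2)) (q - (r + 2) + 1)).ker.subtype)
      (H.d r (p + (r + 2)) (q - (r + 2) + 1)).ker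
      (fun x => by
        have hx : E.d r (p + (r + 2)) (q - (r + 2) + 1) x.1 = 0 := x.2
        have h := DFunLike.congr_fun (hcomm r (p + (r + 2)) (q - (r + 2) + 1)) x.1
        refine AddMonoidHom.mem_ker.mpr ?_
        simpa [AddMonoidHom.comp_apply, hx] using h))
    (by
      intro x hx
      have hx' : (x : ↥(E.page r (p + (r + 2)) (q - (r + 2) + 1))) ∈ (E.d r p q).range :=
        AddSubgroup.mem_addSubgroupOf.mp hx
      obtain ⟨y, hy⟩ := hx'
      show (f r (p + (r + 2)) (q - (r + 2) + 1)) x.1 ∈ (H.d r p q).range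
      refine ⟨f r p q y, ?_⟩
      have h := DFunLike.congr_fun (hcomm r p q) y
      simp only [AddMonoidHom.comp_apply] at h
      rw [h, hy])

end BiregularSpectralSequence

open BiregularSpectralSequence in
/-- A morphism of biregular spectral sequences: maps on every page commuting with the
differentials and compatible with the homology identifications `α`, together with maps
of the abutments preserving the filtrations and compatible with `β`. -/
structure SpectralSequenceHom (E H : BiregularSpectralSequence.{u}) : Type u where
  f : ∀ (r : ℕ) (p q : ℤ), ↥(E.page r p q) →+ ↥(H.page r p q)
  comm_d : ∀ r p q, (H.d r p q).comp (f r p q) =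
    (f r (p + (r + 2)) (q - (r + 2) + 1)).comp (E.d r p q)
  comm_α : ∀ (r : ℕ) (p q : ℤ) (x : ↥(E.page (r + 1) (p + (r + 2)) (q - (r + 2) + 1))),
    H.α r p q (f (r + 1) (p + (r + 2)) (q - (r + 2) + 1) x) =
      pageHomologyMap E H f comm_d r p q (E.α r p q x)
  fab : ∀ n : ℤ, ↥(E.ab n) →+ ↥(H.ab n)
  fil_le : ∀ n p, (E.fil n p).map (fab n) ≤ H.fil n p
  comm_β : ∀ (p q : ℤ) (r : ℕ) (hE : E.rstab p q ≤ r) (hH : H.rstab p q ≤ r)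
    (x : ↥(E.page r p q)),
    H.β p q r hH (f r p q x) = filGradedMap E H fab fil_le (p + q) p (E.β p q r hE x)

namespace SSAux

open BiregularSpectralSequence

lemma quot_subsingleton {G : Type*} [AddGroup G] [Subsingleton G] (N : AddSubgroup G)
    [N.Normal] : Subsingleton (G ⧸ N) :=
  ⟨fun a b => QuotientAddGroup.induction_on a fun x =>
    QuotientAddGroup.induction_on b fun y =>
      congrArg QuotientAddGroup.mk (Subsingleton.elim x y)⟩

/-- Vanishing of a term propagates to the next page, since the next page is a
subquotient of the previous one. -/
lemma page_succ_zero (E : BiregularSpectralSequence.{u}) (r : ℕ) (P Q : ℤ)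
    (h : ∀ x : ↥(E.page r P Q), x = 0) : ∀ x : ↥(E.page (r + 1) P Q), x = 0 := by
  obtain ⟨p, rfl⟩ : ∃ p : ℤ, P = p + (r + 2) := ⟨P - (r + 2), by ring⟩
  obtain ⟨q, rfl⟩ : ∃ q : ℤ, Q = q - (r + 2) + 1 := ⟨Q + (r + 2) - 1, by ring⟩
  intro x
  haveI : Subsingleton ↥(E.page r (p + (r + 2)) (q - (r + 2) + 1)) :=
    ⟨fun a b => (h a).trans (h b).symm⟩
  haveI := quot_subsingleton
    ((E.d r p q).range.addSubgroupOf (E.d r (p + (r + 2)) (q - (r + 2) + 1)).ker)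
  exact (E.α r p q).injective (Subsingleton.elim (E.α r p q x) (E.α r p q 0))

lemma page_zero (E : BiregularSpectralSequence.{u}) (r : ℕ) (P Q : ℤ)
    (h : ∀ x : ↥(E.page 0 P Q), x = 0) : ∀ x : ↥(E.page r P Q), x = 0 := by
  induction r with
  | zero => exact h
  | succ r ih => exact page_succ_zero E r P Q ih

/-- Vanishing of a component of a morphism propagates to the next page. -/
lemma f_succ_zero (E H : BiregularSpectralSequence.{u}) (φ : SpectralSequenceHom E H)
    (r : ℕ) (P Q : ℤ) (h : φ.f r P Q = 0) : φ.f (r + 1) P Q = 0 := by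
  obtain ⟨p, rfl⟩ : ∃ p : ℤ, P = p + (r + 2) := ⟨P - (r + 2), by ring⟩
  obtain ⟨q, rfl⟩ : ∃ q : ℤ, Q = q - (r + 2) + 1 := ⟨Q + (r + 2) - 1, by ring⟩
  ext x
  apply (H.α r p q).injective
  rw [AddMonoidHom.zero_apply, map_zero, φ.comm_α r p q x]
  obtain ⟨y, hy⟩ := QuotientAddGroup.mk_surjective (E.α r p q x)
  rw [← hy]
  unfold pageHomologyMap
  rw [QuotientAddGroup.map_mk, QuotientAddGroup.eq_zero_iff,
    AddSubgroup.mem_addSubgroupOf]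
  simp [h]

/-- The key graded-piece computation: if the component of `φ` at a stable page at
`(p, q)` vanishes, then `φ.fab` pushes the `p`-th filtration step into the
`(p+1)`-st. -/
lemma grzero (E H : BiregularSpectralSequence.{u}) (φ : SpectralSequenceHom E H)
    (p q n : ℤ) (hn : n = p + q)
    (hf : φ.f (max (E.rstab p q) (H.rstab p q)) p q = 0) :
    ∀ x, x ∈ E.fil n p → φ.fab n x ∈ H.fil n (p + 1) := by
  subst hn
  intro x hx
  set r := max (E.rstab p q) (H.rstab p q) with hr
  have hEr : E.rstab p q ≤ r := le_max_left _ _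
  have hHr : H.rstab p q ≤ r := le_max_right _ _
  obtain ⟨y, hy⟩ := (E.β p q r hEr).surjective (QuotientAddGroup.mk ⟨x, hx⟩)
  have h := φ.comm_β p q r hEr hHr y
  rw [hy, hf] at h
  rw [AddMonoidHom.zero_apply, map_zero] at h
  unfold filGradedMap at h
  rw [QuotientAddGroup.map_mk] at h
  have := (QuotientAddGroup.eq_zero_iff _).mp h.symm
  simpa [AddSubgroup.mem_addSubgroupOf] using this

/-- If a stable term vanishes, the corresponding graded piece of the filtration is
trivial, so the filtration is locally constant there. -/
lemma fil_eq_of_page_zero (E : BiregularSpectralSequence.{u}) (p q n : ℤ)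
    (hn : n = p + q) (h : ∀ x : ↥(E.page (E.rstab p q) p q), x = 0) :
    E.fil n p = E.fil n (p + 1) := by
  subst hn
  refine le_antisymm ?_ (E.fil_antitone _ (by omega))
  intro x hx
  haveI : Subsingleton ↥(E.page (E.rstab p q) p q) :=
    ⟨fun a b => (h a).trans (h b).symm⟩
  haveI : Subsingleton
      (E.fil (p + q) p ⧸ ((E.fil (p + q) (p + 1)).addSubgroupOf (E.fil (p + q) p))) :=
    (E.β p q _ le_rfl).toEquiv.symm.subsingleton
  have : (QuotientAddGroup.mk (⟨x, hx⟩ : ↥(E.fil (p + q) p)) :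
      E.fil (p + q) p ⧸ ((E.fil (p + q) (p + 1)).addSubgroupOf (E.fil (p + q) p))) = 0 :=
    Subsingleton.elim _ _
  have := (QuotientAddGroup.eq_zero_iff _).mp this
  simpa [AddSubgroup.mem_addSubgroupOf] using this

end SSAux

/-- (Wang–Zhang, Lemma 2.15.) Let `E₂^{i,j} ⇒ E^{i+j}` and `H₂^{i,j} ⇒ H^{i+j}` be two
convergent (biregular) spectral sequences with a morphism `φ` between them, and let `l`,
`a` be integers. If `E₂^{i,l-i} = 0` for `i < a`, `H₂^{i,l-i} = 0` for `i > a`, and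
`φ₂^{a,l-a} = 0`, then the map `φ^l : E^l → H^l` of abutments is zero. -/
theorem SpectralSequenceHom.ab_eq_zero
    (E H : BiregularSpectralSequence.{u}) (φ : SpectralSequenceHom E H) (l a : ℤ)
    (hE : ∀ i : ℤ, i < a → ∀ x : ↥(E.page 0 i (l - i)), x = 0)
    (hH : ∀ i : ℤ, a < i → ∀ x : ↥(H.page 0 i (l - i)), x = 0)
    (hφ : φ.f 0 a (l - a) = 0) :
    φ.fab l = 0 := by
  open SSAux in
  -- page vanishing propagates to all pages
  have hEr : ∀ (r : ℕ) (i : ℤ), i < a → ∀ x : ↥(E.page r i (l - i)), x = 0 :=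
    fun r i hi => page_zero E r i (l - i) (hE i hi)
  have hHr : ∀ (r : ℕ) (i : ℤ), a < i → ∀ x : ↥(H.page r i (l - i)), x = 0 :=
    fun r i hi => page_zero H r i (l - i) (hH i hi)
  -- the morphism component at (a, l-a) vanishes on all pages
  have hfr : ∀ r : ℕ, φ.f r a (l - a) = 0 := by
    intro r
    induction r with
    | zero => exact hφ
    | succ r ih => exact f_succ_zero E H φ r a (l - a) ih
  -- the filtration on E.ab l is all of it at level a
  have hconstE : ∀ p : ℤ, p < a → E.fil l p = E.fil l (p + 1) := fun p hp =>
    fil_eq_of_page_zero E p (l - p) l (by ring) (hEr _ p hp)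
  obtain ⟨p₀, hp₀⟩ := E.fil_top l
  have htop : E.fil l a = ⊤ := by
    rcases le_or_gt a p₀ with h | h
    · exact le_antisymm le_top (hp₀ ▸ E.fil_antitone l h)
    · have key : ∀ k : ℕ, p₀ + (k : ℤ) ≤ a → E.fil l (p₀ + (k : ℤ)) = ⊤ := by
        intro k
        induction k with
        | zero => intro _; simpa using hp₀
        | succ k ih =>
          intro hk
          have h1 : p₀ + (k : ℤ) < a := by push_cast at hk ⊢; omega
          have h2 : p₀ + ((k : ℤ) + 1) = (p₀ + (k : ℤ)) + 1 := by ring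
          push_cast
          rw [h2, ← hconstE _ h1]
          exact ih (le_of_lt h1)
      have hk1 : p₀ + (((a - p₀).toNat : ℤ)) = a := by omega
      have := key (a - p₀).toNat (by omega)
      rwa [hk1] at this
  -- the filtration on H.ab l is trivial at level a+1
  have hconstH : ∀ p : ℤ, a < p → H.fil l p = H.fil l (p + 1) := fun p hp =>
    fil_eq_of_page_zero H p (l - p) l (by ring) (hHr _ p hp)
  obtain ⟨p₁, hp₁⟩ := H.fil_bot l
  have hbot : H.fil l (a + 1) = ⊥ := by
    rcases le_or_gt p₁ (a + 1) with h | h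
    · exact le_antisymm (hp₁ ▸ H.fil_antitone l h) bot_le
    · have key : ∀ k : ℕ, a + 1 ≤ p₁ - (k : ℤ) → H.fil l (p₁ - (k : ℤ)) = ⊥ := by
        intro k
        induction k with
        | zero => intro _; simpa using hp₁
        | succ k ih =>
          intro hk
          have h1 : a < p₁ - ((k : ℤ) + 1) := by push_cast at hk ⊢; omega
          have h2 : p₁ - ((k : ℤ) + 1) + 1 = p₁ - (k : ℤ) := by ring
          push_cast
          rw [hconstH _ h1, h2]
          exact ih (by push_cast at hk ⊢; omega)
      have hk1 : p₁ - (((p₁ - (a + 1)).toNat : ℤ)) = a + 1 := by omega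
      have := key (p₁ - (a + 1)).toNat (by omega)
      rwa [hk1] at this
  ext x
  have hx : x ∈ E.fil l a := htop ▸ AddSubgroup.mem_top x
  have hmem := grzero E H φ a (l - a) l (by ring) (hfr _) x hx
  rw [hbot] at hmem
  simpa using hmem
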